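/- There exists a full graph homomorphism from G into H if and only if the reduced form of G embeds as an induced subgraph into the reduced form of H. -/

import Mathlib

/-- A full homomorphism between simple graphs: adjacency is both preserved and
reflected. -/
def IsFullHom {V W : Type*} (G : SimpleGraph V) (H : SimpleGraph W) (f : V → W) : Prop :=
  ∀ u v, G.Adj u v ↔ H.Adj (f u) (f v)

/-- A graph is reduced if distinct vertices have distinct neighborhoods. -/
def Reduced {V : Type*} (G : SimpleGraph V) : Prop :=
  ∀ u v : V, G.neighborSet u = G.neighborSet v → u = v

/-- The reduced form of G: vertices are the neighborhoods of vertices of G, with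
N(u) adjacent to N(v) iff u and v are adjacent in G. -/
def ReducedForm {V : Type*} (G : SimpleGraph V) :
    SimpleGraph {s : Set V // ∃ v, s = G.neighborSet v} where
  Adj s t := ∃ u v, (s : Set V) = G.neighborSet u ∧ (t : Set V) = G.neighborSet v ∧ G.Adj u v
  symm := by
    refine ⟨?_⟩
    rintro s t ⟨u, v, hu, hv, h⟩
    exact ⟨v, u, hv, hu, h.symm⟩
  loopless := by
    refine ⟨?_⟩
    rintro s ⟨u, v, hu, hv, h⟩
    have h2 : v ∈ G.neighborSet u := h
    rw [hu.symm.trans hv] at h2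
    exact G.loopless.irrefl v h2

lemma redAdj_iff {V : Type*} (G : SimpleGraph V)
    {s t : {s : Set V // ∃ v, s = G.neighborSet v}} {u v : V}
    (hu : (s : Set V) = G.neighborSet u) (hv : (t : Set V) = G.neighborSet v) :
    (ReducedForm G).Adj s t ↔ G.Adj u v := by
  constructor
  · rintro ⟨a, b, ha, hb, hab⟩
    have h1 : b ∈ G.neighborSet a := hab
    rw [ha.symm.trans hu] at h1
    have h2 : u ∈ G.neighborSet b := (SimpleGraph.mem_neighborSet ..).2 h1 |>.symm
    rw [hb.symm.trans hv] at h2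
    exact ((SimpleGraph.mem_neighborSet ..).1 h2).symm
  · intro h
    exact ⟨u, v, hu, hv, h⟩

/-- There is a full homomorphism from G into H iff the reduced form of G embeds
(as an induced subgraph, i.e., via an injective full homomorphism) into the reduced
form of H. -/
theorem fullHom_iff_reducedForm_embeds {V W : Type*} (G : SimpleGraph V) (H : SimpleGraph W) :
    (∃ f : V → W, IsFullHom G H f) ↔
    (∃ g : {s : Set V // ∃ v, s = G.neighborSet v} → {s : Set W // ∃ v, s = H.neighborSet v},
        Function.Injective g ∧ IsFullHom (ReducedForm G) (ReducedForm H) g) := by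
  constructor
  · rintro ⟨f, hf⟩
    -- choose a representative for each neighborhood
    set rep : {s : Set V // ∃ v, s = G.neighborSet v} → V := fun s => s.2.choose with hrep
    have hrepspec : ∀ s : {s : Set V // ∃ v, s = G.neighborSet v}, (s : Set V) = G.neighborSet (rep s) := fun s => s.2.choose_spec
    refine ⟨fun s => ⟨H.neighborSet (f (rep s)), f (rep s), rfl⟩, ?_, ?_⟩
    · intro s t hst
      have hN : H.neighborSet (f (rep s)) = H.neighborSet (f (rep t)) :=
        congrArg Subtype.val hst
      have : (s : Set V) = (t : Set V) := by
        rw [hrepspec s, hrepspec t]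
        ext x
        simp only [SimpleGraph.mem_neighborSet]
        rw [hf, hf, ← SimpleGraph.mem_neighborSet, ← SimpleGraph.mem_neighborSet, hN]
      exact Subtype.ext this
    · intro s t
      rw [redAdj_iff G (hrepspec s) (hrepspec t), redAdj_iff H rfl rfl, hf]
  · rintro ⟨g, hginj, hg⟩
    set lift : V → {s : Set V // ∃ v, s = G.neighborSet v} :=
      fun v => ⟨G.neighborSet v, v, rfl⟩ with hlift
    set f : V → W := fun v => (g (lift v)).2.choose with hfdef
    have hfspec : ∀ v, ((g (lift v)) : Set W) = H.neighborSet (f v) :=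
      fun v => (g (lift v)).2.choose_spec
    refine ⟨f, fun u v => ?_⟩
    rw [← redAdj_iff G (s := lift u) (t := lift v) rfl rfl, hg,
      redAdj_iff H (hfspec u) (hfspec v)]
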